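/- Fix reals c_{mnk} ≥ 0, q_k ≥ 0, B_k ∈ ℝ, x₀_k > 0, P_max > 0, natural numbers D_k ≤ N, and weights W_{mnk} > 0. Writing g_c(t,p) = t·log₂(1 + c·p/t) for t > 0 and g_c(0,p) = 0, the set of pairs (I, p) ∈ ℝ^{M×N×K} × ℝ^{M×N×K} satisfying: 0 ≤ I_{mnk} ≤ 1 for all m,n,k; Σ_k I_{mnk} ≤ 1 for all m,n; I_{mnk} = 0 whenever n > D_k; 0 ≤ p_{mnk} ≤ I_{mnk}·P_max for all m,n,k; Σ_k W_{mnk}·I_{mnk} ≤ 1 for all m,n; and Σ_{m,n} g_{c_{mnk}}(I_{mnk}, p_{mnk}) − ((x_k + x₀_k)/(2√(x₀_k)))·q_k/ln 2 ≥ B_k with x_k = Σ_{m,n} I_{mnk}, for all k, is a convex subset of ℝ^{M×N×K} × ℝ^{M×N×K}. -/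

import Mathlib

open Finset

/-- Perspective of `p ↦ log₂(1 + c·p)`: `g(t,p) = t·log₂(1 + c·p/t)` for `t ≠ 0`,
and `g(0,p) = 0`. -/
noncomputable def gPersp (c t p : ℝ) : ℝ :=
  if t = 0 then 0 else t * Real.logb 2 (1 + c * p / t)

/-- The feasible region of the convex SCA subproblem (relaxed assignments, effective
powers, delay, reweighted ℓ₁ and linearized rate constraints) is a convex set. -/
lemma gPersp_smul (c t p b : ℝ) (hb : 0 < b) :
    gPersp c (b * t) (b * p) = b * gPersp c t p := by
  unfold gPersp
  rcases eq_or_ne t 0 with h | h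
  · simp [h]
  · have hbt : b * t ≠ 0 := mul_ne_zero hb.ne' h
    rw [if_neg hbt, if_neg h]
    have : c * (b * p) / (b * t) = c * p / t := by field_simp
    rw [this]; ring

lemma gPersp_combo (c t₁ p₁ t₂ p₂ a b : ℝ) (hc : 0 ≤ c)
    (ht₁ : 0 ≤ t₁) (ht₂ : 0 ≤ t₂) (hp₁ : 0 ≤ p₁) (hp₂ : 0 ≤ p₂)
    (h1 : t₁ = 0 → p₁ = 0) (h2 : t₂ = 0 → p₂ = 0)
    (ha : 0 ≤ a) (hb : 0 ≤ b) (hab : a + b = 1) :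
    a * gPersp c t₁ p₁ + b * gPersp c t₂ p₂ ≤
      gPersp c (a * t₁ + b * t₂) (a * p₁ + b * p₂) := by
  rcases ha.eq_or_lt with rfl | ha'
  · have hb1 : b = 1 := by linarith
    simp [hb1]
  rcases hb.eq_or_lt with rfl | hb'
  · have ha1 : a = 1 := by linarith
    simp [ha1]
  rcases ht₁.eq_or_lt with h | h
  · have hp : p₁ = 0 := h1 h.symm
    rw [← h, hp, show a*(0:ℝ)+b*t₂ = b*t₂ by ring, show a*(0:ℝ)+b*p₂ = b*p₂ by ring,
      gPersp_smul c t₂ p₂ b hb']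
    simp [gPersp]
  rcases ht₂.eq_or_lt with h' | h'
  · have hp : p₂ = 0 := h2 h'.symm
    rw [← h', hp, show a*t₁+b*(0:ℝ) = a*t₁ by ring, show a*p₁+b*(0:ℝ) = a*p₁ by ring,
      gPersp_smul c t₁ p₁ a ha']
    simp [gPersp]
  -- main case
  have hT : 0 < a * t₁ + b * t₂ := by positivity
  have hy₁ : (0:ℝ) < 1 + c * p₁ / t₁ := by positivity
  have hy₂ : (0:ℝ) < 1 + c * p₂ / t₂ := by positivity
  unfold gPersp
  rw [if_neg h.ne', if_neg h'.ne', if_neg hT.ne']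
  set T := a * t₁ + b * t₂ with hTdef
  have hlam : a * t₁ / T + b * t₂ / T = 1 := by field_simp; exact hTdef.symm
  have hmem : ∀ y : ℝ, 0 < y → y ∈ Set.Ioi (0:ℝ) := fun y hy => hy
  have hconc := (strictConcaveOn_log_Ioi.concaveOn).2 (hmem _ hy₁) (hmem _ hy₂)
      (by positivity : (0:ℝ) ≤ a * t₁ / T) (by positivity : (0:ℝ) ≤ b * t₂ / T) hlam
  simp only [smul_eq_mul] at hconc
  have hcomb : a * t₁ / T * (1 + c * p₁ / t₁) + b * t₂ / T * (1 + c * p₂ / t₂)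
      = 1 + c * (a * p₁ + b * p₂) / T := by
    field_simp
    ring
  rw [hcomb] at hconc
  have hlog2 : 0 < Real.log 2 := Real.log_pos (by norm_num)
  have key : a * t₁ * Real.log (1 + c * p₁ / t₁) + b * t₂ * Real.log (1 + c * p₂ / t₂)
      ≤ T * Real.log (1 + c * (a * p₁ + b * p₂) / T) := by
    have := mul_le_mul_of_nonneg_left hconc hT.le
    calc a * t₁ * Real.log (1 + c * p₁ / t₁) + b * t₂ * Real.log (1 + c * p₂ / t₂)
        = T * (a * t₁ / T * Real.log (1 + c * p₁ / t₁) + b * t₂ / T * Real.log (1 + c * p₂ / t₂)) := by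
          field_simp
      _ ≤ _ := this
  simp only [Real.logb, div_eq_mul_inv]
  calc a * (t₁ * (Real.log (1 + c * p₁ / t₁) * (Real.log 2)⁻¹))
        + b * (t₂ * (Real.log (1 + c * p₂ / t₂) * (Real.log 2)⁻¹))
      = (a * t₁ * Real.log (1 + c * p₁ / t₁) + b * t₂ * Real.log (1 + c * p₂ / t₂)) / Real.log 2 := by
        field_simp
    _ ≤ T * Real.log (1 + c * (a * p₁ + b * p₂) / T) / Real.log 2 := by
        gcongr
    _ = T * (Real.log (1 + c * (a * p₁ + b * p₂) / T) * (Real.log 2)⁻¹) := by ring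


theorem sca_subproblem_feasible_set_convex (M N K : ℕ)
    (c : Fin M → Fin N → Fin K → ℝ) (q B x₀ : Fin K → ℝ) (D : Fin K → ℕ) (Pmax : ℝ)
    (W : Fin M → Fin N → Fin K → ℝ)
    (hc : ∀ m n k, 0 ≤ c m n k) (hq : ∀ k, 0 ≤ q k) (hx₀ : ∀ k, 0 < x₀ k)
    (hD : ∀ k, D k ≤ N) (hPmax : 0 < Pmax) (hW : ∀ m n k, 0 < W m n k) :
    Convex ℝ {x : (Fin M → Fin N → Fin K → ℝ) × (Fin M → Fin N → Fin K → ℝ) |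
      (∀ m n k, 0 ≤ x.1 m n k ∧ x.1 m n k ≤ 1) ∧
      (∀ m n, (∑ k, x.1 m n k) ≤ 1) ∧
      (∀ m n k, D k < n.val + 1 → x.1 m n k = 0) ∧
      (∀ m n k, 0 ≤ x.2 m n k ∧ x.2 m n k ≤ x.1 m n k * Pmax) ∧
      (∀ m n, (∑ k, W m n k * x.1 m n k) ≤ 1) ∧
      (∀ k, B k ≤ (∑ m, ∑ n, gPersp (c m n k) (x.1 m n k) (x.2 m n k))
        - ((∑ m, ∑ n, x.1 m n k) + x₀ k) / (2 * Real.sqrt (x₀ k)) * q k / Real.log 2)} := by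
  rintro ⟨X1, X2⟩ ⟨hx1, hx2, hx3, hx4, hx5, hx6⟩ ⟨Y1, Y2⟩ ⟨hy1, hy2, hy3, hy4, hy5, hy6⟩
    a b ha hb hab
  dsimp only at hx1 hx2 hx3 hx4 hx5 hx6 hy1 hy2 hy3 hy4 hy5 hy6
  simp only [Set.mem_setOf_eq, Prod.fst_add, Prod.snd_add, Prod.smul_fst, Prod.smul_snd,
    Pi.add_apply, Pi.smul_apply, smul_eq_mul]
  refine ⟨?_, ?_, ?_, ?_, ?_, ?_⟩
  · intro m n k
    have h1 := hx1 m n k; have h2 := hy1 m n k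
    constructor
    · nlinarith [h1.1, h2.1]
    · nlinarith [h1.2, h2.2]
  · intro m n
    rw [Finset.sum_add_distrib, ← Finset.mul_sum, ← Finset.mul_sum]
    nlinarith [hx2 m n, hy2 m n, (Finset.sum_nonneg fun k _ => (hx1 m n k).1 :
      0 ≤ ∑ k, X1 m n k), (Finset.sum_nonneg fun k _ => (hy1 m n k).1 : 0 ≤ ∑ k, Y1 m n k)]
  · intro m n k hk
    rw [hx3 m n k hk, hy3 m n k hk]; ring
  · intro m n k
    have h1 := hx4 m n k; have h2 := hy4 m n k
    constructor
    · nlinarith [h1.1, h2.1]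
    · nlinarith [h1.2, h2.2]
  · intro m n
    calc (∑ k, W m n k * (a * X1 m n k + b * Y1 m n k))
        = a * (∑ k, W m n k * X1 m n k) + b * (∑ k, W m n k * Y1 m n k) := by
          rw [Finset.mul_sum, Finset.mul_sum, ← Finset.sum_add_distrib]
          exact Finset.sum_congr rfl fun k _ => by ring
      _ ≤ 1 := by
          nlinarith [mul_le_mul_of_nonneg_left (hx5 m n) ha,
            mul_le_mul_of_nonneg_left (hy5 m n) hb]
  · intro k
    have hsum : a * (∑ m, ∑ n, gPersp (c m n k) (X1 m n k) (X2 m n k))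
        + b * (∑ m, ∑ n, gPersp (c m n k) (Y1 m n k) (Y2 m n k))
        ≤ ∑ m, ∑ n, gPersp (c m n k) (a * X1 m n k + b * Y1 m n k)
            (a * X2 m n k + b * Y2 m n k) := by
      rw [Finset.mul_sum, Finset.mul_sum, ← Finset.sum_add_distrib]
      refine Finset.sum_le_sum fun m _ => ?_
      rw [Finset.mul_sum, Finset.mul_sum, ← Finset.sum_add_distrib]
      refine Finset.sum_le_sum fun n _ => ?_
      refine gPersp_combo _ _ _ _ _ _ _ (hc m n k) (hx1 m n k).1 (hy1 m n k).1
        (hx4 m n k).1 (hy4 m n k).1 ?_ ?_ ha hb hab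
      · intro h0
        have := (hx4 m n k).2
        rw [h0] at this
        nlinarith [(hx4 m n k).1]
      · intro h0
        have := (hy4 m n k).2
        rw [h0] at this
        nlinarith [(hy4 m n k).1]
    have haff : (∑ m, ∑ n, (a * X1 m n k + b * Y1 m n k)) =
        a * (∑ m, ∑ n, X1 m n k) + b * (∑ m, ∑ n, Y1 m n k) := by
      rw [Finset.mul_sum, Finset.mul_sum, ← Finset.sum_add_distrib]
      refine Finset.sum_congr rfl fun m _ => ?_
      rw [Finset.mul_sum, Finset.mul_sum, ← Finset.sum_add_distrib]
    have h6x := hx6 k; have h6y := hy6 k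
    rw [haff]
    have heq : (a * (∑ m, ∑ n, X1 m n k) + b * (∑ m, ∑ n, Y1 m n k) + x₀ k)
          / (2 * Real.sqrt (x₀ k)) * q k / Real.log 2
        = a * (((∑ m, ∑ n, X1 m n k) + x₀ k) / (2 * Real.sqrt (x₀ k)) * q k / Real.log 2)
          + b * (((∑ m, ∑ n, Y1 m n k) + x₀ k) / (2 * Real.sqrt (x₀ k)) * q k / Real.log 2) := by
      have : a * (∑ m, ∑ n, X1 m n k) + b * (∑ m, ∑ n, Y1 m n k) + x₀ k
          = a * ((∑ m, ∑ n, X1 m n k) + x₀ k) + b * ((∑ m, ∑ n, Y1 m n k) + x₀ k) := by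
        linear_combination (x₀ k) * hab.symm
      rw [this]; ring
    rw [heq]
    have hBk : a * B k + b * B k = B k := by linear_combination (B k) * hab
    linarith [mul_le_mul_of_nonneg_left (hx6 k) ha, mul_le_mul_of_nonneg_left (hy6 k) hb,
      hsum, hBk]
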